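/- arXiv:1304.7529 — 7 statements merged into one kernel-verified Lean document; each statement's English description precedes it below -/
import Mathlib

section
/- Let Φ: X ⊸ X be a bi-continuous multi-valued function on a topological space X (i.e., both Φ and Φ⁻¹ are lower and upper semicontinuous). Then the fixed fractal 𝔽(Φ) = closure(⋃_{n∈ω} Φⁿ(Fix(Φ))) satisfies Φ(𝔽(Φ)) = 𝔽(Φ). -/
open Set

/-- Image of a set under a multi-valued function (relation) `Φ ⊆ X × X`. -/
def mImage {X : Type*} (Φ : Set (X × X)) (A : Set X) : Set X := {y | ∃ x ∈ A, (x, y) ∈ Φ}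

/-- Iterates `Φⁿ(A)`. -/
def mIter {X : Type*} (Φ : Set (X × X)) : ℕ → Set X → Set X
  | 0, A => A
  | n + 1, A => mImage Φ (mIter Φ n A)

/-- Fixed points of a multi-valued function. -/
def mFix {X : Type*} (Φ : Set (X × X)) : Set X := {x | (x, x) ∈ Φ}

/-- The value `Φ(x)` of a multi-valued function at a point. -/
def mVal {X : Type*} (Φ : Set (X × X)) (x : X) : Set X := {y | (x, y) ∈ Φ}

/-- The inverse multi-valued function. -/
def mInv {X : Type*} (Φ : Set (X × X)) : Set (X × X) := {p | (p.2, p.1) ∈ Φ}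

theorem stmt3 {X : Type*} [TopologicalSpace X] (Φ : Set (X × X))
    (hlsc : ∀ U : Set X, IsOpen U → IsOpen {x | (mVal Φ x ∩ U).Nonempty})
    (husc : ∀ F : Set X, IsClosed F → IsClosed {x | (mVal Φ x ∩ F).Nonempty})
    (hlsc' : ∀ U : Set X, IsOpen U → IsOpen {x | (mVal (mInv Φ) x ∩ U).Nonempty})
    (husc' : ∀ F : Set X, IsClosed F → IsClosed {x | (mVal (mInv Φ) x ∩ F).Nonempty}) :
    mImage Φ (closure (⋃ n, mIter Φ n (mFix Φ))) = closure (⋃ n, mIter Φ n (mFix Φ)) := by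
  set S : Set X := ⋃ n, mIter Φ n (mFix Φ) with hS
  -- S ⊆ Φ(S)
  have hsub : S ⊆ mImage Φ S := by
    intro s hs
    rw [hS, mem_iUnion] at hs
    obtain ⟨n, hn⟩ := hs
    cases n with
    | zero => exact ⟨s, mem_iUnion.2 ⟨0, hn⟩, hn⟩
    | succ m =>
      obtain ⟨x, hx, hxs⟩ := hn
      exact ⟨x, mem_iUnion.2 ⟨m, hx⟩, hxs⟩
  -- Φ(S) ⊆ S
  have himg : mImage Φ S ⊆ S := by
    rintro y ⟨x, hx, hxy⟩
    rw [hS, mem_iUnion] at hx ⊢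
    obtain ⟨n, hn⟩ := hx
    exact ⟨n + 1, ⟨x, hn, hxy⟩⟩
  apply Subset.antisymm
  · rintro y ⟨x, hx, hxy⟩
    rw [mem_closure_iff] at hx ⊢
    intro V hV hyV
    obtain ⟨s, hsO, hsS⟩ := hx _ (hlsc V hV) ⟨y, hxy, hyV⟩
    obtain ⟨t, htΦ, htV⟩ := hsO
    exact ⟨t, htV, himg ⟨s, hsS, htΦ⟩⟩
  · intro y hy
    have hC : IsClosed {z | (mVal (mInv Φ) z ∩ closure S).Nonempty} :=
      husc' _ isClosed_closure
    have hSC : S ⊆ {z | (mVal (mInv Φ) z ∩ closure S).Nonempty} := by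
      intro s hs
      obtain ⟨x, hxS, hxs⟩ := hsub hs
      exact ⟨x, hxs, subset_closure hxS⟩
    have := (closure_minimal hSC hC) hy
    obtain ⟨x, hx1, hx2⟩ := this
    exact ⟨x, hx2, hx1⟩
end

section
/- Let Φ: X ⊸ X be a contracting compact-valued multi-function on a complete metric space X with Lipschitz constant λ < 1. Then the set Fix(Φ) = {x : x ∈ Φ(x)} is nonempty, and moreover for every x₀ ∈ X one has d(x₀, Fix(Φ)) ≤ d(x₀, Φ(x₀))/(1−λ). -/
open Set

/-- Image of a set under a set-valued map `Φ : X → Set X`. -/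
def sImage {X : Type*} (Φ : X → Set X) (A : Set X) : Set X := ⋃ a ∈ A, Φ a

/-- Iterates `Φⁿ(A)`. -/
def sIter {X : Type*} (Φ : X → Set X) : ℕ → Set X → Set X
  | 0, A => A
  | n + 1, A => sImage Φ (sIter Φ n A)

/-- Fixed points of a set-valued map. -/
def sFix {X : Type*} (Φ : X → Set X) : Set X := {x | x ∈ Φ x}

theorem stmt7 {X : Type*} [MetricSpace X] [CompleteSpace X] [Nonempty X]
    (Φ : X → Set X) (lam : ℝ) (hlam0 : 0 ≤ lam) (hlam : lam < 1)
    (hc : ∀ x, IsCompact (Φ x)) (hne : ∀ x, (Φ x).Nonempty)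
    (hlip : ∀ x y, Metric.hausdorffDist (Φ x) (Φ y) ≤ lam * dist x y) :
    (sFix Φ).Nonempty ∧
      ∀ x₀ : X, Metric.infDist x₀ (sFix Φ) ≤ Metric.infDist x₀ (Φ x₀) / (1 - lam) := by
  have hedist : ∀ x y : X, EMetric.hausdorffEdist (Φ x) (Φ y) ≠ ⊤ := fun x y =>
    Metric.hausdorffEdist_ne_top_of_nonempty_of_bounded (hne x) (hne y)
      (hc x).isBounded (hc y).isBounded
  -- next point selector
  have hsel : ∀ x : X, ∃ y ∈ Φ x, Metric.infDist x (Φ x) = dist x y := fun x =>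
    (hc x).exists_infDist_eq_dist (hne x) x
  choose nxt hmem hdist using hsel
  -- the key construction from any starting point
  have key : ∀ x₀ : X, ∃ a ∈ sFix Φ, dist x₀ a ≤ Metric.infDist x₀ (Φ x₀) / (1 - lam) := by
    intro x₀
    set f : ℕ → X := fun n => nxt^[n] x₀ with hf
    have hfs : ∀ n, f (n + 1) = nxt (f n) := fun n => Function.iterate_succ_apply' nxt n x₀
    set C := Metric.infDist x₀ (Φ x₀) with hC
    have hgeo : ∀ n, dist (f n) (f (n + 1)) ≤ C * lam ^ n := by
      intro n
      induction n with
      | zero =>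
        show dist (f 0) (f 1) ≤ C * lam ^ 0
        rw [hfs 0, show f 0 = x₀ from rfl, pow_zero, mul_one, hC, hdist x₀]
      | succ n ih =>
        rw [hfs (n + 1), hfs n, ← hdist (nxt (f n))]
        calc Metric.infDist (nxt (f n)) (Φ (nxt (f n)))
            ≤ Metric.hausdorffDist (Φ (f n)) (Φ (nxt (f n))) :=
              Metric.infDist_le_hausdorffDist_of_mem (hmem (f n)) (hedist _ _)
          _ ≤ lam * dist (f n) (nxt (f n)) := hlip _ _
          _ = lam * dist (f n) (f (n + 1)) := by rw [hfs n]
          _ ≤ lam * (C * lam ^ n) := mul_le_mul_of_nonneg_left ih hlam0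
          _ = C * lam ^ (n + 1) := by ring
    have hcau : CauchySeq f := cauchySeq_of_le_geometric lam C hlam hgeo
    obtain ⟨a, ha⟩ := cauchySeq_tendsto_of_complete hcau
    have hfix : a ∈ sFix Φ := by
      have h0 : Metric.infDist a (Φ a) = 0 := by
        have hlim : Filter.Tendsto (fun n => dist a (f (n + 1)) + lam * dist (f n) a)
            Filter.atTop (nhds 0) := by
          have h1 : Filter.Tendsto (fun n => dist a (f (n + 1))) Filter.atTop (nhds 0) := by
            have := (ha.comp (Filter.tendsto_add_atTop_nat 1))
            simpa [dist_comm] using (tendsto_iff_dist_tendsto_zero.mp this)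
          have h2 : Filter.Tendsto (fun n => lam * dist (f n) a) Filter.atTop (nhds 0) := by
            have := tendsto_iff_dist_tendsto_zero.mp ha
            simpa using this.const_mul lam
          simpa using h1.add h2
        have hb : ∀ n, Metric.infDist a (Φ a) ≤ dist a (f (n + 1)) + lam * dist (f n) a := by
          intro n
          calc Metric.infDist a (Φ a)
              ≤ Metric.infDist (f (n + 1)) (Φ a) + dist a (f (n + 1)) :=
                Metric.infDist_le_infDist_add_dist
            _ ≤ Metric.hausdorffDist (Φ (f n)) (Φ a) + dist a (f (n + 1)) := by
                have : f (n + 1) ∈ Φ (f n) := by rw [hfs n]; exact hmem (f n)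
                exact add_le_add_left
                  (Metric.infDist_le_hausdorffDist_of_mem this (hedist _ _)) _
            _ ≤ lam * dist (f n) a + dist a (f (n + 1)) := add_le_add_left (hlip _ _) _
            _ = dist a (f (n + 1)) + lam * dist (f n) a := by ring
        have := le_of_tendsto_of_tendsto' tendsto_const_nhds hlim hb
        exact le_antisymm this Metric.infDist_nonneg
      exact ((hc a).isClosed.mem_iff_infDist_zero (hne a)).mpr h0
    refine ⟨a, hfix, ?_⟩
    have := dist_le_of_le_geometric_of_tendsto₀ lam C hlam hgeo ha
    simpa [hf] using this
  constructor
  · obtain ⟨x₀⟩ := (inferInstance : Nonempty X)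
    obtain ⟨a, ha, -⟩ := key x₀
    exact ⟨a, ha⟩
  · intro x₀
    obtain ⟨a, ha, hd⟩ := key x₀
    exact le_trans (Metric.infDist_le_dist_of_mem ha) hd
end

section
/- Let Φ: X ⊸ X be a contracting finite-valued multi-function on a complete metric space X with Lipschitz constant λ < 1 (with respect to the Hausdorff distance). Then the set Fix(Φ) = {x : x ∈ Φ(x)} is finite. -/
open Set

theorem stmt8 {X : Type*} [MetricSpace X] [CompleteSpace X]
    (Φ : X → Set X) (lam : ℝ) (hlam0 : 0 ≤ lam) (hlam : lam < 1)
    (hf : ∀ x, (Φ x).Finite) (hne : ∀ x, (Φ x).Nonempty)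
    (hlip : ∀ x y, Metric.hausdorffDist (Φ x) (Φ y) ≤ lam * dist x y) :
    (sFix Φ).Finite := by
  classical
  set F : Set X := sFix Φ with hF
  have hedist : ∀ a b : X, EMetric.hausdorffEdist (Φ a) (Φ b) ≠ ⊤ := fun a b =>
    Metric.hausdorffEdist_ne_top_of_nonempty_of_bounded (hne a) (hne b)
      (hf a).isBounded (hf b).isBounded
  -- basic estimate: for x ∈ F and any y, infDist x (Φ y) ≤ lam * dist x y
  have key : ∀ x ∈ F, ∀ y : X, Metric.infDist x (Φ y) ≤ lam * dist x y := by
    intro x hx y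
    calc Metric.infDist x (Φ y) ≤ Metric.hausdorffDist (Φ x) (Φ y) :=
          Metric.infDist_le_hausdorffDist_of_mem hx (hedist x y)
      _ ≤ lam * dist x y := hlip x y
  -- isolation: every fixed point is isolated in F
  have isol : ∀ x ∈ F, ∃ ε > 0, ∀ y ∈ F, dist y x < ε → y = x := by
    intro x hx
    obtain ⟨r, hr0, hr⟩ : ∃ r > 0, ∀ z ∈ Φ x, dist x z < r → z = x := by
      by_cases h : ((Φ x) \ {x}).Nonempty
      · have hfin : ((fun z => dist x z) '' ((Φ x) \ {x})).Finite :=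
          ((hf x).diff).image _
        obtain ⟨r, hrmem, hrmin⟩ := Set.Finite.exists_minimalFor id _ hfin (h.image _)
        obtain ⟨z0, hz0, rfl⟩ := hrmem
        refine ⟨dist x z0, ?_, ?_⟩
        · exact dist_pos.mpr fun hxz => hz0.2 (by simp [hxz.symm])
        · intro z hz hzlt
          by_contra hzx
          have : dist x z ∈ (fun z => dist x z) '' ((Φ x) \ {x}) :=
            ⟨z, ⟨hz, by simp [hzx]⟩, rfl⟩
          have := hrmin this (le_of_lt hzlt)
          simp only [id] at this
          exact absurd (lt_of_le_of_lt this hzlt) (lt_irrefl _)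
      · refine ⟨1, one_pos, fun z hz _ => ?_⟩
        by_contra hzx
        exact h ⟨z, hz, by simp [hzx]⟩
    refine ⟨r / (1 + lam), div_pos hr0 (by linarith), fun y hy hylt => ?_⟩
    have h1 : Metric.infDist y (Φ x) ≤ lam * dist y x := key y hy x
    obtain ⟨z, hz, hzd⟩ := ((hf x).isCompact).exists_infDist_eq_dist (hne x) y
    have hdz : dist y z ≤ lam * dist y x := hzd ▸ h1
    have hxz : dist x z < r := by
      have : dist x z ≤ dist x y + dist y z := dist_triangle _ _ _
      have h2 : dist x y + dist y z ≤ (1 + lam) * dist y x := by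
        rw [dist_comm x y]; nlinarith
      have h3 : dist y x * (1 + lam) < r :=
        (lt_div_iff₀ (show (0:ℝ) < 1 + lam by linarith)).mp hylt
      nlinarith
    have hz_eq : z = x := hr z hz hxz
    rw [hz_eq] at hdz
    have : dist y x = 0 := by nlinarith [dist_nonneg (x := y) (y := x)]
    exact dist_eq_zero.mp this
  -- F is closed
  have hFclosed : IsClosed F := by
    refine isClosed_of_closure_subset fun x hx' => ?_
    have : Metric.infDist x (Φ x) = 0 := by
      refine le_antisymm ?_ Metric.infDist_nonneg
      refine le_of_forall_pos_le_add fun ε hε => ?_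
      obtain ⟨y, hyF, hyd⟩ := Metric.mem_closure_iff.mp hx' (ε / (2 * (1 + lam)))
        (div_pos hε (by linarith))
      have h1 : Metric.infDist x (Φ x) ≤ Metric.infDist y (Φ x) + dist x y :=
        Metric.infDist_le_infDist_add_dist
      have h2 : Metric.infDist y (Φ x) ≤ lam * dist y x := key y hyF x
      rw [dist_comm y x] at h2
      have hlam1 : (0:ℝ) < 1 + lam := by linarith
      have he : (1 + lam) * (ε / (2 * (1 + lam))) = ε / 2 := by field_simp
      nlinarith [Metric.infDist_nonneg (x := x) (s := Φ x),
        dist_nonneg (x := x) (y := y)]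
    exact (((hf x).isClosed).mem_iff_infDist_zero (hne x) (x := x)).mpr this
  -- if F is empty we are done
  rcases F.eq_empty_or_nonempty with hFe | ⟨x₀, hx₀⟩
  · simp [hFe]
  -- boundedness: all fixed points are within M of x₀
  obtain ⟨C, hC⟩ := (hf x₀).isBounded.subset_closedBall x₀
  have hC0 : 0 ≤ C := by
    obtain ⟨w, hw⟩ := hne x₀
    have := hC hw
    simp only [Metric.mem_closedBall] at this
    linarith [dist_nonneg (x := w) (y := x₀)]
  set M : ℝ := C / (1 - lam) with hM
  have hM0 : 0 ≤ M := div_nonneg hC0 (by linarith)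
  have hbound : ∀ x ∈ F, dist x x₀ ≤ M := by
    intro x hx
    obtain ⟨z, hz, hzd⟩ := ((hf x₀).isCompact).exists_infDist_eq_dist (hne x₀) x
    have h1 : dist x z ≤ lam * dist x x₀ := hzd ▸ key x hx x₀
    have h2 : dist z x₀ ≤ C := by have := hC hz; simpa using this
    have : dist x x₀ ≤ dist x z + dist z x₀ := dist_triangle _ _ _
    rw [hM, le_div_iff₀ (by linarith : (0:ℝ) < 1 - lam)]
    nlinarith
  -- iterates of {x₀} approximate F geometrically
  have hiter : ∀ n : ℕ, (sIter Φ n {x₀}).Finite ∧ (sIter Φ n {x₀}).Nonempty ∧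
      ∀ x ∈ F, Metric.infDist x (sIter Φ n {x₀}) ≤ lam ^ n * dist x x₀ := by
    intro n
    induction n with
    | zero =>
      refine ⟨finite_singleton _, singleton_nonempty _, fun x hx => ?_⟩
      simp [sIter, Metric.infDist_singleton]
    | succ n ih =>
      obtain ⟨hfin, hnon, hd⟩ := ih
      have hfin' : (sIter Φ (n+1) {x₀}).Finite := by
        show (sImage Φ (sIter Φ n {x₀})).Finite
        exact hfin.biUnion fun a _ => hf a
      have hnon' : (sIter Φ (n+1) {x₀}).Nonempty := by
        obtain ⟨a, ha⟩ := hnon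
        obtain ⟨b, hb⟩ := hne a
        exact ⟨b, mem_biUnion ha hb⟩
      refine ⟨hfin', hnon', fun x hx => ?_⟩
      obtain ⟨y, hy, hyd⟩ := hfin.isCompact.exists_infDist_eq_dist hnon x
      have h1 : dist x y ≤ lam ^ n * dist x x₀ := hyd ▸ hd x hx
      have h2 : Metric.infDist x (Φ y) ≤ lam * dist x y := key x hx y
      have h3 : Φ y ⊆ sIter Φ (n+1) {x₀} := fun b hb => mem_biUnion hy hb
      calc Metric.infDist x (sIter Φ (n+1) {x₀}) ≤ Metric.infDist x (Φ y) :=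
            Metric.infDist_le_infDist_of_subset h3 (hne y)
        _ ≤ lam * dist x y := h2
        _ ≤ lam * (lam ^ n * dist x x₀) := by nlinarith
        _ = lam ^ (n+1) * dist x x₀ := by ring
  -- F is totally bounded, hence compact
  have hTB : TotallyBounded F := by
    rw [Metric.totallyBounded_iff]
    intro ε hε
    obtain ⟨n, hn⟩ := exists_pow_lt_of_lt_one (div_pos hε (by linarith : (0:ℝ) < M + 1)) hlam
    obtain ⟨hfin, hnon, hd⟩ := hiter n
    refine ⟨sIter Φ n {x₀}, hfin, fun x hx => ?_⟩
    obtain ⟨y, hy, hyd⟩ := hfin.isCompact.exists_infDist_eq_dist hnon x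
    have h1 : dist x y ≤ lam ^ n * dist x x₀ := hyd ▸ hd x hx
    have h2 : lam ^ n * dist x x₀ < ε := by
      have hb := hbound x hx
      have hlamn : (0:ℝ) ≤ lam ^ n := pow_nonneg hlam0 n
      have : lam ^ n * (M + 1) < ε :=
        (lt_div_iff₀ (show (0:ℝ) < M + 1 by linarith)).mp hn
      nlinarith
    exact mem_biUnion hy (Metric.mem_ball.mpr (by linarith))
  have hcompact : IsCompact F := TotallyBounded.isCompact_of_isClosed hTB hFclosed
  -- conclude: infinite F would have an accumulation point, contradicting isolation
  by_contra hinf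
  rw [← Set.not_infinite, not_not] at hinf
  obtain ⟨x, hxF, hacc⟩ := hinf.exists_accPt_of_subset_isCompact hcompact subset_rfl
  obtain ⟨ε, hε0, hsep⟩ := isol x hxF
  rw [accPt_iff_nhds] at hacc
  obtain ⟨y, ⟨hyU, hyF⟩, hyx⟩ := hacc (Metric.ball x ε) (Metric.ball_mem_nhds x hε0)
  exact hyx (hsep y hyF (Metric.mem_ball.mp hyU))
end

section
/- Let Φ: X ⊸ X be a finite-valued multi-function on a T₁ topological space X such that Fix(Φ) is finite. If the family {Φⁿ⁺¹(Fix(Φ)) \ Φⁿ(Fix(Φ))}_{n∈ω} is locally finite in X, then the fixed fractal 𝔽(Φ) = closure(⋃_n Φⁿ(Fix(Φ))) equals the orbit ⋃_n Φⁿ(Fix(Φ)) and is a closed discrete subspace of X. -/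
open Set

lemma mImage_eq_biUnion {X : Type*} (Φ : Set (X × X)) (A : Set X) :
    mImage Φ A = ⋃ x ∈ A, mVal Φ x := by
  ext y; simp [mImage, mVal]

lemma mIter_finite {X : Type*} (Φ : Set (X × X)) (hf : ∀ x, (mVal Φ x).Finite)
    {A : Set X} (hA : A.Finite) : ∀ n, (mIter Φ n A).Finite := by
  intro n
  induction n with
  | zero => exact hA
  | succ n ih =>
    rw [mIter, mImage_eq_biUnion]
    exact ih.biUnion fun x _ => hf x

lemma mIter_decomp {X : Type*} (Φ : Set (X × X)) (A : Set X) :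
    ∀ n, ∀ y ∈ mIter Φ n A, y ∈ A ∨ ∃ k, y ∈ mIter Φ (k + 1) A \ mIter Φ k A := by
  intro n
  induction n with
  | zero => intro y hy; exact Or.inl hy
  | succ n ih =>
    intro y hy
    by_cases h : y ∈ mIter Φ n A
    · exact ih y h
    · exact Or.inr ⟨n, hy, h⟩

theorem stmt12 {X : Type*} [TopologicalSpace X] [T1Space X] (Φ : Set (X × X))
    (hf : ∀ x, (mVal Φ x).Finite) (hne : ∀ x, (mVal Φ x).Nonempty)
    (hFixfin : (mFix Φ).Finite)
    (hlf : LocallyFinite fun n : ℕ => mIter Φ (n + 1) (mFix Φ) \ mIter Φ n (mFix Φ)) :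
    closure (⋃ n, mIter Φ n (mFix Φ)) = ⋃ n, mIter Φ n (mFix Φ) ∧
    IsClosed (⋃ n, mIter Φ n (mFix Φ)) ∧
    DiscreteTopology ↥(⋃ n, mIter Φ n (mFix Φ)) := by
  set O : Set X := ⋃ n, mIter Φ n (mFix Φ) with hO
  -- every point has a neighborhood meeting O in a finite set
  have key : ∀ x : X, ∃ U ∈ nhds x, (U ∩ O).Finite := by
    intro x
    obtain ⟨U, hU, hs⟩ := hlf x
    refine ⟨U, hU, ?_⟩
    have hsub : U ∩ O ⊆ mFix Φ ∪
        ⋃ n ∈ {n : ℕ | ((mIter Φ (n + 1) (mFix Φ) \ mIter Φ n (mFix Φ)) ∩ U).Nonempty},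
          (mIter Φ (n + 1) (mFix Φ) \ mIter Φ n (mFix Φ)) := by
      rintro y ⟨hyU, hyO⟩
      obtain ⟨n, hn⟩ := mem_iUnion.mp hyO
      rcases mIter_decomp Φ (mFix Φ) n y hn with h | ⟨k, hk⟩
      · exact Or.inl h
      · exact Or.inr (mem_biUnion ⟨y, hk, hyU⟩ hk)
    exact Finite.subset (hFixfin.union
      (hs.biUnion fun n _ => ((mIter_finite Φ hf hFixfin (n + 1)).subset diff_subset))) hsub
  have hcd : IsClosed O ∧ DiscreteTopology O := by
    rw [← isDiscrete_iff_discreteTopology, isClosed_and_discrete_iff]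
    intro x
    obtain ⟨U, hU, hUfin⟩ := key x
    rw [Filter.disjoint_principal_right]
    have hfin : ((U ∩ O) \ {x}).Finite := hUfin.diff
    have hW : U \ ((U ∩ O) \ {x}) ∈ nhds x := by
      rw [diff_eq]
      exact Filter.inter_mem hU (hfin.isClosed.isOpen_compl.mem_nhds (by simp))
    rw [mem_nhdsWithin_iff_exists_mem_nhds_inter]
    refine ⟨U \ ((U ∩ O) \ {x}), hW, ?_⟩
    rintro y ⟨⟨hyU, hy⟩, hyx : y ≠ x⟩
    intro hyO
    exact hy ⟨⟨hyU, hyO⟩, hyx⟩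
  exact ⟨hcd.1.closure_eq, hcd.1, hcd.2⟩
end

section
/- Let Φ: X ⊸ X be a multi-valued function on a topological space X such that every set Φⁿ(Fix(Φ)) is closed in X and the family {Φⁿ⁺¹(Fix(Φ)) \ Φⁿ(Fix(Φ))}_{n∈ω} is locally finite. Then for any compact E ⊆ X there is n ∈ ω such that E ∩ 𝔽(Φ) = E ∩ Φⁿ(Fix(Φ)), where 𝔽(Φ) = closure(⋃_m Φᵐ(Fix(Φ))). -/
open Set

lemma mIter_succ_fix {X : Type*} (Φ : Set (X × X)) (n : ℕ) :
    mIter Φ n (mFix Φ) ⊆ mIter Φ (n + 1) (mFix Φ) := by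
  induction n with
  | zero => intro x hx; exact ⟨x, hx, hx⟩
  | succ n ih =>
      rintro y ⟨x, hx, hxy⟩
      exact ⟨x, ih hx, hxy⟩

lemma mIter_mono_fix {X : Type*} (Φ : Set (X × X)) {m n : ℕ} (h : m ≤ n) :
    mIter Φ m (mFix Φ) ⊆ mIter Φ n (mFix Φ) := by
  induction n with
  | zero => simpa [Nat.le_zero.mp h]
  | succ n ih =>
      rcases Nat.lt_or_ge m (n+1) with h' | h'
      · exact (ih (Nat.lt_succ_iff.mp h')).trans (mIter_succ_fix Φ n)
      · simpa [Nat.le_antisymm h h']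

theorem stmt13 {X : Type*} [TopologicalSpace X] (Φ : Set (X × X))
    (hcl : ∀ n : ℕ, IsClosed (mIter Φ n (mFix Φ)))
    (hlf : LocallyFinite fun n : ℕ => mIter Φ (n + 1) (mFix Φ) \ mIter Φ n (mFix Φ))
    (E : Set X) (hE : IsCompact E) :
    ∃ n : ℕ, E ∩ closure (⋃ m, mIter Φ m (mFix Φ)) = E ∩ mIter Φ n (mFix Φ) := by
  classical
  set S : ℕ → Set X := fun n => mIter Φ n (mFix Φ) with hS
  set D : ℕ → Set X := fun n => S (n + 1) \ S n with hD
  have hdecomp : (⋃ m, S m) = S 0 ∪ ⋃ n, D n := by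
    ext x
    constructor
    · rintro ⟨_, ⟨m, rfl⟩, hx⟩
      induction m with
      | zero => exact Or.inl hx
      | succ m ih =>
          by_cases h : x ∈ S m
          · exact ih h
          · exact Or.inr (mem_iUnion.mpr ⟨m, hx, h⟩)
    · rintro (hx | hx)
      · exact mem_iUnion.mpr ⟨0, hx⟩
      · rcases mem_iUnion.mp hx with ⟨n, hn⟩
        exact mem_iUnion.mpr ⟨n + 1, hn.1⟩
  have hclosed : closure (⋃ m, S m) = ⋃ m, S m := by
    apply Subset.antisymm _ subset_closure
    conv_lhs => rw [hdecomp, closure_union, hlf.closure_iUnion]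
    apply union_subset
    · rw [(hcl 0).closure_eq]
      exact subset_iUnion S 0
    · apply iUnion_subset
      intro n
      have h1 : closure (D n) ⊆ S (n + 1) :=
        (hcl (n+1)).closure_subset_iff.mpr diff_subset
      exact h1.trans (subset_iUnion S (n+1))
  -- compactness: finitely many differences meet E
  have hfin : {i : ℕ | (D i ∩ E).Nonempty}.Finite :=
    hlf.finite_nonempty_inter_compact hE
  obtain ⟨b, hb⟩ := hfin.bddAbove
  set N := b + 1 with hN
  have hDempty : ∀ n, N ≤ n → D n ∩ E = ∅ := by
    intro n hn
    by_contra h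
    have : n ∈ {i : ℕ | (D i ∩ E).Nonempty} := nonempty_iff_ne_empty.mpr h
    have := hb this
    omega
  have key : ∀ m, E ∩ S m ⊆ S N := by
    intro m
    induction m with
    | zero => exact inter_subset_right.trans (mIter_mono_fix Φ (Nat.zero_le N))
    | succ m ih =>
        rcases Nat.lt_or_ge m N with h | h
        · exact inter_subset_right.trans (mIter_mono_fix Φ h)
        · rintro x ⟨hxE, hxS⟩
          by_cases hxm : x ∈ S m
          · exact ih ⟨hxE, hxm⟩
          · exfalso
            have : x ∈ D m ∩ E := ⟨⟨hxS, hxm⟩, hxE⟩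
            rw [hDempty m h] at this
            exact this
  refine ⟨N, ?_⟩
  rw [hclosed]
  apply Subset.antisymm
  · rintro x ⟨hxE, hxU⟩
    rcases mem_iUnion.mp hxU with ⟨m, hm⟩
    exact ⟨hxE, key m ⟨hxE, hm⟩⟩
  · rintro x ⟨hxE, hxS⟩
    exact ⟨hxE, mem_iUnion.mpr ⟨N, hxS⟩⟩
end

section
/- Let Φ: ℝ ⊸ ℝ be given by Φ(x) = {3x, 3x−2}. Then for every n ∈ ω, Φⁿ({0}) = {−Σ_{i=0}^{n−1} 2xᵢ3ⁱ : (xᵢ) ∈ {0,1}ⁿ}, and consequently the orbit ⋃_{n∈ω} Φⁿ({0}) equals −M where M = {Σ_{k=0}^∞ 2xₖ3ᵏ : (xₖ) ∈ {0,1}^ω with only finitely many xₖ = 1} is the macro-Cantor set. -/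
open Set

/-- The action of the multi-function `Φ : x ↦ {3x, 3x − 2}` on subsets of `ℝ`. -/
def macroMap (A : Set ℝ) : Set ℝ := (fun x => 3 * x) '' A ∪ (fun x => 3 * x - 2) '' A

/-- Iterates of `macroMap`. -/
def macroIter : ℕ → Set ℝ → Set ℝ
  | 0, A => A
  | n + 1, A => macroMap (macroIter n A)

/-- The macro-Cantor set: all finite sums `Σ 2xₖ 3^k` with `xₖ ∈ {0,1}`. -/
def macroCantor : Set ℝ := {r | ∃ s : Finset ℕ, r = ∑ k ∈ s, 2 * (3 : ℝ) ^ k}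

lemma succ_sum (n : ℕ) (y : Fin (n+1) → Bool) :
    ∑ i : Fin (n+1), (if y i then (2:ℝ) else 0) * 3 ^ (i:ℕ)
      = (if y 0 then (2:ℝ) else 0) +
        3 * ∑ i : Fin n, (if y i.succ then (2:ℝ) else 0) * 3 ^ (i:ℕ) := by
  rw [Fin.sum_univ_succ, Finset.mul_sum]
  congr 1
  · simp
  · apply Finset.sum_congr rfl
    intro i _
    simp only [Fin.val_succ]
    by_cases h : y i.succ <;> simp [h, pow_succ] <;> ring

lemma iter_eq : ∀ n : ℕ, macroIter n {0} =
    {r : ℝ | ∃ x : Fin n → Bool,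
      r = -∑ i : Fin n, (if x i then (2 : ℝ) else 0) * 3 ^ (i : ℕ)} := by
  intro n
  induction n with
  | zero =>
    ext r
    simp [macroIter]
  | succ n ih =>
    ext r
    simp only [macroIter, macroMap, ih, mem_union, mem_image, mem_setOf_eq]
    constructor
    · rintro (⟨y, ⟨x, rfl⟩, rfl⟩ | ⟨y, ⟨x, rfl⟩, rfl⟩)
      · refine ⟨Fin.cons false x, ?_⟩
        rw [succ_sum]
        simp
      · refine ⟨Fin.cons true x, ?_⟩
        rw [succ_sum]
        simp
        ring
    · rintro ⟨y, rfl⟩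
      rw [succ_sum]
      cases hb : y 0
      · exact Or.inl ⟨_, ⟨fun i => y i.succ, rfl⟩, by first | (simp; ring) | simp⟩
      · exact Or.inr ⟨_, ⟨fun i => y i.succ, rfl⟩, by first | (simp; ring) | simp⟩

theorem stmt15 :
    (∀ n : ℕ, macroIter n {0} =
      {r : ℝ | ∃ x : Fin n → Bool,
        r = -∑ i : Fin n, (if x i then (2 : ℝ) else 0) * 3 ^ (i : ℕ)}) ∧
    (⋃ n, macroIter n {0}) = Neg.neg '' macroCantor := by
  refine ⟨iter_eq, ?_⟩
  ext r
  simp only [mem_iUnion, iter_eq, mem_setOf_eq, mem_image, macroCantor]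
  constructor
  · rintro ⟨n, x, rfl⟩
    refine ⟨∑ i : Fin n, (if x i then (2:ℝ) else 0) * 3 ^ (i:ℕ),
      ⟨(Finset.univ.filter (fun i => x i)).image Fin.val, ?_⟩, rfl⟩
    rw [Finset.sum_image (by intro a _ b _ h; exact Fin.val_injective h)]
    rw [Finset.sum_filter]
    apply Finset.sum_congr rfl
    intro i _
    by_cases h : x i <;> simp [h]
  · rintro ⟨m, ⟨s, rfl⟩, rfl⟩
    set n := s.sup id + 1 with hn
    have hsub : s ⊆ Finset.range n := by
      intro k hk
      simp only [Finset.mem_range, hn]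
      exact Nat.lt_succ_of_le (Finset.le_sup (f := id) hk)
    refine ⟨n, fun i => decide ((i:ℕ) ∈ s), ?_⟩
    congr 1
    rw [Fin.sum_univ_eq_sum_range (fun k => (if decide (k ∈ s) then (2:ℝ) else 0) * 3 ^ k)]
    simp only [ite_mul, zero_mul]
    rw [← Finset.sum_filter]
    have : (Finset.range n).filter (fun k => decide (k ∈ s) = true) = s := by
      ext k
      simp only [Finset.mem_filter, Finset.mem_range, decide_eq_true_eq]
      exact ⟨fun h => h.2, fun h => ⟨Finset.mem_range.mp (hsub h), h⟩⟩
    rw [this]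
end

section
/- Let Φ: ℝ ⊸ ℝ be given by Φ(x) = {3x, 3x−2}. Then Fix(Φ) = {0, 1}, and the fixed fractal 𝔽(Φ) = closure(⋃_n Φⁿ({0,1})) equals (−M) ∪ (M+1), where M is the macro-Cantor set; in particular 𝔽(Φ) ⊆ ℤ is closed and discrete in ℝ. -/
open Set

namespace Stmt16Aux

noncomputable def S (s : Finset ℕ) : ℝ := ∑ k ∈ s, 2 * (3 : ℝ) ^ k

lemma S_map_succ (t : Finset ℕ) :
    S (t.map ⟨Nat.succ, Nat.succ_injective⟩) = 3 * S t := by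
  unfold S
  rw [Finset.sum_map, Finset.mul_sum]
  apply Finset.sum_congr rfl
  intro k _
  simp [Function.Embedding.coeFn_mk, pow_succ]
  ring

lemma zero_not_mem_map_succ (t : Finset ℕ) :
    0 ∉ t.map ⟨Nat.succ, Nat.succ_injective⟩ := by
  simp [Finset.mem_map]

lemma S_insert_zero (t : Finset ℕ) :
    S (insert 0 (t.map ⟨Nat.succ, Nat.succ_injective⟩)) = 3 * S t + 2 := by
  rw [S, Finset.sum_insert (zero_not_mem_map_succ t)]
  have := S_map_succ t
  unfold S at this
  rw [this]
  unfold S; ring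

/-- The target set. -/
def T : Set ℝ := Neg.neg '' macroCantor ∪ (fun m => m + 1) '' macroCantor

lemma mem_macroCantor (s : Finset ℕ) : S s ∈ macroCantor := ⟨s, rfl⟩

lemma macroMap_mem_left {A : Set ℝ} {x : ℝ} (hx : x ∈ A) : 3 * x ∈ macroMap A :=
  Or.inl ⟨x, hx, rfl⟩

lemma macroMap_mem_right {A : Set ℝ} {x : ℝ} (hx : x ∈ A) : 3 * x - 2 ∈ macroMap A :=
  Or.inr ⟨x, hx, rfl⟩

/-- Forward inclusion: each iterate lands in `T`. -/
lemma iter_subset_T : ∀ n, macroIter n ({0, 1} : Set ℝ) ⊆ T := by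
  intro n
  induction n with
  | zero =>
    intro x hx
    rcases hx with h | h
    · exact Or.inl ⟨0, ⟨∅, by simp⟩, by simp [h]⟩
    · exact Or.inr ⟨0, ⟨∅, by simp⟩, by simp [h, Set.mem_singleton_iff.mp h]⟩
  | succ n ih =>
    intro x hx
    rcases hx with ⟨y, hy, rfl⟩ | ⟨y, hy, rfl⟩
    · -- x = 3 y
      rcases ih hy with ⟨m, ⟨s, rfl⟩, rfl⟩ | ⟨m, ⟨s, rfl⟩, rfl⟩
      · -- y = -(S s), 3y = -(3 S s)
        refine Or.inl ⟨3 * S s, ?_, by unfold S; ring⟩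
        have := mem_macroCantor (s.map ⟨Nat.succ, Nat.succ_injective⟩)
        rwa [S_map_succ] at this
      · -- y = S s + 1, 3y = 3 S s + 3 = (3 S s + 2) + 1
        refine Or.inr ⟨3 * S s + 2, ?_, by unfold S; simp; ring⟩
        have := mem_macroCantor (insert 0 (s.map ⟨Nat.succ, Nat.succ_injective⟩))
        rwa [S_insert_zero] at this
    · -- x = 3 y - 2
      rcases ih hy with ⟨m, ⟨s, rfl⟩, rfl⟩ | ⟨m, ⟨s, rfl⟩, rfl⟩
      · -- y = -(S s), 3y - 2 = -(3 S s + 2)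
        refine Or.inl ⟨3 * S s + 2, ?_, by unfold S; ring⟩
        have := mem_macroCantor (insert 0 (s.map ⟨Nat.succ, Nat.succ_injective⟩))
        rwa [S_insert_zero] at this
      · -- y = S s + 1, 3y - 2 = 3 S s + 1
        refine Or.inr ⟨3 * S s, ?_, by unfold S; simp; ring⟩
        have := mem_macroCantor (s.map ⟨Nat.succ, Nat.succ_injective⟩)
        rwa [S_map_succ] at this

lemma decompose (s : Finset ℕ) :
    ∃ t : Finset ℕ,
      ((∀ k ∈ t, k + 1 ∈ s) ∧
        ((0 ∉ s ∧ S s = 3 * S t) ∨ (0 ∈ s ∧ S s = 3 * S t + 2))) := by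
  classical
  refine ⟨s.preimage Nat.succ (Nat.succ_injective.injOn), ?_, ?_⟩
  · intro k hk
    simpa [Finset.mem_preimage] using hk
  · have hmap : (s.preimage Nat.succ (Nat.succ_injective.injOn)).map
        ⟨Nat.succ, Nat.succ_injective⟩ = s.erase 0 := by
      ext x
      simp only [Finset.mem_map, Finset.mem_preimage, Finset.mem_erase,
        Function.Embedding.coeFn_mk]
      constructor
      · rintro ⟨k, hk, rfl⟩; exact ⟨Nat.succ_ne_zero k, hk⟩
      · rintro ⟨hx0, hxs⟩
        obtain ⟨k, rfl⟩ := Nat.exists_eq_succ_of_ne_zero hx0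
        exact ⟨k, hxs, rfl⟩
    by_cases h0 : 0 ∈ s
    · right
      refine ⟨h0, ?_⟩
      have : S s = S (insert 0 (s.erase 0)) := by
        rw [Finset.insert_erase h0]
      rw [this, ← hmap, S_insert_zero]
    · left
      refine ⟨h0, ?_⟩
      have : s.erase 0 = s := Finset.erase_eq_of_notMem h0
      rw [← S_map_succ, hmap, this]

/-- Backward inclusion helper: for `s ⊆ range n`, both `-(S s)` and `S s + 1`
belong to the `n`-th iterate. -/
lemma mem_iter : ∀ n, ∀ s : Finset ℕ, s ⊆ Finset.range n →
    (-(S s) ∈ macroIter n ({0, 1} : Set ℝ) ∧ S s + 1 ∈ macroIter n ({0, 1} : Set ℝ)) := by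
  intro n
  induction n with
  | zero =>
    intro s hs
    have : s = ∅ := by simpa using Finset.subset_empty.mp (by simpa using hs)
    subst this
    constructor
    · left; simp [S]
    · right; simp [S]
  | succ n ih =>
    intro s hs
    obtain ⟨t, ht, hcase⟩ := decompose s
    have htr : t ⊆ Finset.range n := by
      intro k hk
      have := hs (ht k hk)
      simp only [Finset.mem_range] at this ⊢
      omega
    obtain ⟨h1, h2⟩ := ih t htr
    rcases hcase with ⟨_, hS⟩ | ⟨_, hS⟩
    · constructor
      · -- -(S s) = 3 * (-(S t))
        have : -(S s) = 3 * (-(S t)) := by rw [hS]; ring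
        rw [this]; exact macroMap_mem_left h1
      · -- S s + 1 = 3 * (S t + 1) - 2
        have : S s + 1 = 3 * (S t + 1) - 2 := by rw [hS]; ring
        rw [this]; exact macroMap_mem_right h2
    · constructor
      · -- -(S s) = 3 * (-(S t)) - 2
        have : -(S s) = 3 * (-(S t)) - 2 := by rw [hS]; ring
        rw [this]; exact macroMap_mem_right h1
      · -- S s + 1 = 3 * (S t + 1)
        have : S s + 1 = 3 * (S t + 1) := by rw [hS]; ring
        rw [this]; exact macroMap_mem_left h2

lemma union_eq_T : (⋃ n, macroIter n ({0, 1} : Set ℝ)) = T := by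
  apply Set.Subset.antisymm
  · exact Set.iUnion_subset iter_subset_T
  · rintro x (⟨m, ⟨s, rfl⟩, rfl⟩ | ⟨m, ⟨s, rfl⟩, rfl⟩)
    · obtain ⟨h, -⟩ := mem_iter (s.sup id + 1) s
        (fun k hk => Finset.mem_range.mpr (Nat.lt_succ_of_le (Finset.le_sup (f := id) hk)))
      exact Set.mem_iUnion.mpr ⟨_, h⟩
    · obtain ⟨-, h⟩ := mem_iter (s.sup id + 1) s
        (fun k hk => Finset.mem_range.mpr (Nat.lt_succ_of_le (Finset.le_sup (f := id) hk)))
      exact Set.mem_iUnion.mpr ⟨_, h⟩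

lemma T_subset_int : T ⊆ Set.range (Int.cast : ℤ → ℝ) := by
  rintro x (⟨m, ⟨s, rfl⟩, rfl⟩ | ⟨m, ⟨s, rfl⟩, rfl⟩)
  · exact ⟨-(∑ k ∈ s, 2 * 3 ^ k), by push_cast; ring⟩
  · exact ⟨(∑ k ∈ s, 2 * 3 ^ k) + 1, by push_cast; ring⟩

lemma isClosed_of_subset_int {A : Set ℝ} (h : A ⊆ Set.range (Int.cast : ℤ → ℝ)) :
    IsClosed A := by
  have : A = (Int.cast : ℤ → ℝ) '' ((Int.cast : ℤ → ℝ) ⁻¹' A) := by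
    rw [Set.image_preimage_eq_inter_range, Set.inter_eq_self_of_subset_left h]
  rw [this]
  exact Int.isClosedEmbedding_coe_real.isClosedMap _ (isClosed_discrete _)

lemma discrete_range_int : DiscreteTopology ↥(Set.range (Int.cast : ℤ → ℝ)) :=
  (Topology.IsEmbedding.toHomeomorph
    Int.isClosedEmbedding_coe_real.isEmbedding).symm.isEmbedding.discreteTopology

end Stmt16Aux

theorem stmt16 :
    {x : ℝ | x ∈ ({3 * x, 3 * x - 2} : Set ℝ)} = {0, 1} ∧
    closure (⋃ n, macroIter n ({0, 1} : Set ℝ)) =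
      Neg.neg '' macroCantor ∪ (fun m => m + 1) '' macroCantor ∧
    closure (⋃ n, macroIter n ({0, 1} : Set ℝ)) ⊆ Set.range (Int.cast : ℤ → ℝ) ∧
    IsClosed (closure (⋃ n, macroIter n ({0, 1} : Set ℝ))) ∧
    DiscreteTopology ↥(closure (⋃ n, macroIter n ({0, 1} : Set ℝ))) := by
  have hU : (⋃ n, macroIter n ({0, 1} : Set ℝ)) = Stmt16Aux.T := Stmt16Aux.union_eq_T
  have hclosed : IsClosed Stmt16Aux.T :=
    Stmt16Aux.isClosed_of_subset_int Stmt16Aux.T_subset_int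
  have hcl : closure (⋃ n, macroIter n ({0, 1} : Set ℝ)) = Stmt16Aux.T := by
    rw [hU, hclosed.closure_eq]
  refine ⟨?_, ?_, ?_, ?_, ?_⟩
  · ext x
    simp only [Set.mem_setOf_eq, Set.mem_insert_iff, Set.mem_singleton_iff]
    constructor
    · rintro (h | h)
      · left; linarith
      · right; linarith
    · rintro (rfl | rfl)
      · left; norm_num
      · right; norm_num
  · rw [hcl]; rfl
  · rw [hcl]; exact Stmt16Aux.T_subset_int
  · exact isClosed_closure
  · rw [hcl]
    exact DiscreteTopology.of_subset Stmt16Aux.discrete_range_int Stmt16Aux.T_subset_int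
end
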